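/- Let G = (X, E) be a graph whose vertex set can be partitioned into α(G) cliques (complete induced subgraphs). Then for every n ≥ 1, α(G^{∧n}) = α(G)^n, where G^{∧n} is the n-fold AND (strong) power; consequently the zero-error capacity C₀(G) = lim_n (1/n)·log₂ α(G^{∧n}) equals log₂ α(G). -/

import Mathlib

open Finset

def strongPi {A : Type*} {V : A → Type*} (G : ∀ a, SimpleGraph (V a)) :
    SimpleGraph (∀ a, V a) where
  Adj u v := u ≠ v ∧ ∀ a, u a = v a ∨ (G a).Adj (u a) (v a)
  symm := ⟨by
    rintro u v ⟨hne, h⟩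
    exact ⟨hne.symm, fun a => (h a).imp Eq.symm (fun h' => h'.symm)⟩⟩
  loopless := ⟨by rintro u ⟨hne, -⟩; exact hne rfl⟩

noncomputable def indepNum {V : Type*} [Fintype V] (G : SimpleGraph V) : ℕ :=
  sSup {n | ∃ s : Finset V, (↑s : Set V).Pairwise (fun u v => ¬ G.Adj u v) ∧ s.card = n}

lemma indepSet_bddAbove {V : Type*} [Fintype V] (G : SimpleGraph V) :
    BddAbove {n | ∃ s : Finset V, (↑s : Set V).Pairwise (fun u v => ¬ G.Adj u v) ∧ s.card = n} :=
  ⟨Fintype.card V, by rintro n ⟨s, -, rfl⟩; exact s.card_le_univ⟩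

lemma le_indepNum {V : Type*} [Fintype V] (G : SimpleGraph V) {s : Finset V}
    (hs : (↑s : Set V).Pairwise (fun u v => ¬ G.Adj u v)) : s.card ≤ indepNum G :=
  le_csSup (indepSet_bddAbove G) ⟨s, hs, rfl⟩

lemma indepNum_mem {V : Type*} [Fintype V] (G : SimpleGraph V) :
    ∃ s : Finset V, (↑s : Set V).Pairwise (fun u v => ¬ G.Adj u v) ∧ s.card = indepNum G := by
  have h0 : (0 : ℕ) ∈ {n | ∃ s : Finset V,
      (↑s : Set V).Pairwise (fun u v => ¬ G.Adj u v) ∧ s.card = n} := ⟨∅, by simp, by simp⟩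
  exact Nat.sSup_mem ⟨0, h0⟩ (indepSet_bddAbove G)

lemma indepNum_le_of_cliqueCover {V W : Type*} [Fintype V] [Fintype W] [DecidableEq W] (G : SimpleGraph V)
    (f : V → W) (hf : ∀ u v, f u = f v → u = v ∨ G.Adj u v) :
    indepNum G ≤ Fintype.card W := by
  obtain ⟨s, hs, hc⟩ := indepNum_mem G
  rw [← hc]
  have hinj : Set.InjOn f ↑s := by
    intro u hu v hv h
    rcases hf u v h with h1 | h2
    · exact h1
    · by_contra hne
      exact hs hu hv hne h2
  calc s.card = (s.image f).card := (Finset.card_image_of_injOn hinj).symm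
    _ ≤ Fintype.card W := Finset.card_le_univ _

theorem stmt15 {V : Type*} [Fintype V] (G : SimpleGraph V)
    (hpart : ∃ f : V → Fin (indepNum G), ∀ u v, f u = f v → u = v ∨ G.Adj u v) :
    (∀ n : ℕ, 1 ≤ n → indepNum (strongPi (fun _ : Fin n => G)) = (indepNum G) ^ n) ∧
    Filter.Tendsto
      (fun n : ℕ => (1 / n : ℝ) * Real.logb 2 (indepNum (strongPi (fun _ : Fin n => G))))
      Filter.atTop (nhds (Real.logb 2 (indepNum G))) := by
  obtain ⟨f, hf⟩ := hpart
  have key : ∀ n : ℕ, 1 ≤ n →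
      indepNum (strongPi (fun _ : Fin n => G)) = (indepNum G) ^ n := by
    intro n _
    obtain ⟨s, hs, hc⟩ := indepNum_mem G
    apply le_antisymm
    · have h := indepNum_le_of_cliqueCover (strongPi fun _ : Fin n => G)
        (fun u a => f (u a)) ?_
      · simpa using h
      · intro u v h
        by_cases huv : u = v
        · exact Or.inl huv
        · exact Or.inr ⟨huv, fun a => hf (u a) (v a) (congrFun h a)⟩
    · have hsub : ((Fintype.piFinset (fun _ : Fin n => s) : Finset (Fin n → V)) : Set _).Pairwise
          (fun u v => ¬ (strongPi fun _ : Fin n => G).Adj u v) := by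
        intro u hu v hv hne hadj
        obtain ⟨a, ha⟩ := Function.ne_iff.mp hne
        simp only [Finset.mem_coe, Fintype.mem_piFinset] at hu hv
        rcases hadj.2 a with h | h
        · exact ha h
        · exact hs (hu a) (hv a) ha h
      have h := le_indepNum _ hsub
      rwa [Fintype.card_piFinset, Finset.prod_const, Finset.card_univ, Fintype.card_fin, hc] at h
  refine ⟨key, ?_⟩
  have hev : ∀ᶠ n : ℕ in Filter.atTop,
      Real.logb 2 ((indepNum G : ℝ)) =
      (1 / n : ℝ) * Real.logb 2 (indepNum (strongPi (fun _ : Fin n => G))) := by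
    filter_upwards [Filter.eventually_ge_atTop 1] with n hn
    have hn' : (n : ℝ) ≠ 0 := by positivity
    rw [key n hn]
    push_cast
    rw [Real.logb_pow]
    field_simp
  exact Filter.Tendsto.congr' hev tendsto_const_nhds
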